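/- Let μₙ be probability measures supported on the lattice Gₙ = vₙ + wₙℤ ⊆ ℝ with widths wₙ > 0, and suppose the local limit theorem sup_{x ∈ Gₙ} |μₙ({x})/wₙ − f(x)| → 0 holds, where f is a continuous probability density. Let [a,b] be a compact interval on which f ≥ c > 0. Then the histogram densities hₙ(x) = Σ_{y ∈ Gₙ} (μₙ({y})/wₙ)·1_{(y−wₙ/2, y+wₙ/2]}(x) satisfy sup_{x ∈ [a,b]} |hₙ(x)/f(x) − 1| → 0, provided wₙ → 0. -/
import Mathlib

open MeasureTheory Filter Topology

lemma mem_cell_iff (v w x : ℝ) (hw : 0 < w) (k : ℤ) :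
    x ∈ Set.Ioc (v + w * (k : ℝ) - w / 2) (v + w * (k : ℝ) + w / 2) ↔
      (k : ℝ) - 1/2 < (x - v) / w ∧ (x - v) / w ≤ (k : ℝ) + 1/2 := by
  rw [Set.mem_Ioc, lt_div_iff₀ hw, div_le_iff₀ hw]
  constructor <;> rintro ⟨h1, h2⟩ <;> constructor <;> nlinarith

theorem stmt_2 (v w : ℕ → ℝ) (hw : ∀ n, 0 < w n) (hw0 : Tendsto w atTop (𝓝 0))
    (μn : ℕ → Measure ℝ) [∀ n, IsProbabilityMeasure (μn n)]
    (hsupp : ∀ n, (μn n) {x : ℝ | ∃ k : ℤ, x = v n + w n * k}ᶜ = 0)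
    (f : ℝ → ℝ) (hf_cont : Continuous f) (hf_nonneg : ∀ x, 0 ≤ f x)
    (hf_int : Integrable f) (hf_one : ∫ x, f x = 1)
    (a b c : ℝ) (hab : a < b) (hc : 0 < c) (hfc : ∀ x ∈ Set.Icc a b, c ≤ f x)
    (hLLT : ∀ ε > 0, ∃ N : ℕ, ∀ n ≥ N, ∀ k : ℤ,
      |((μn n) {v n + w n * (k : ℝ)}).toReal / w n - f (v n + w n * (k : ℝ))| < ε)
    (h : ℕ → ℝ → ℝ)
    (hh : ∀ n x, h n x = ∑' k : ℤ, ((μn n) {v n + w n * (k : ℝ)}).toReal / w n *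
        Set.indicator (Set.Ioc (v n + w n * (k : ℝ) - w n / 2)
          (v n + w n * (k : ℝ) + w n / 2)) 1 x) :
    ∀ ε > 0, ∃ N : ℕ, ∀ n ≥ N, ∀ x ∈ Set.Icc a b, |h n x / f x - 1| < ε := by
  intro ε hε
  have hu : UniformContinuousOn f (Set.Icc (a - 1) (b + 1)) :=
    isCompact_Icc.uniformContinuousOn_of_continuous hf_cont.continuousOn
  rw [Metric.uniformContinuousOn_iff] at hu
  obtain ⟨δ, hδ, hδ'⟩ := hu (ε * c / 2) (by positivity)
  obtain ⟨N₁, hN₁⟩ := hLLT (ε * c / 2) (by positivity)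
  obtain ⟨N₂, hN₂⟩ := (hw0.eventually (gt_mem_nhds (lt_min hδ one_pos))).exists_forall_of_atTop
  refine ⟨max N₁ N₂, fun n hn x hx => ?_⟩
  have hwn := hw n
  have hwsmall : w n < min δ 1 := hN₂ n (le_trans (le_max_right _ _) hn)
  set k₀ : ℤ := ⌈(x - v n) / w n - 1/2⌉ with hk₀
  have hk1 : (x - v n) / w n - 1/2 ≤ (k₀ : ℝ) := Int.le_ceil _
  have hk2 : (k₀ : ℝ) < (x - v n) / w n - 1/2 + 1 := Int.ceil_lt_add_one _
  have hmem : x ∈ Set.Ioc (v n + w n * (k₀ : ℝ) - w n / 2) (v n + w n * (k₀ : ℝ) + w n / 2) := by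
    rw [mem_cell_iff _ _ _ hwn]
    constructor <;> linarith
  -- compute h n x
  have hhx : h n x = ((μn n) {v n + w n * (k₀ : ℝ)}).toReal / w n := by
    rw [hh]
    rw [tsum_eq_single k₀ ?_]
    · rw [Set.indicator_of_mem hmem, Pi.one_apply, mul_one]
    · intro k hk
      rw [Set.indicator_of_notMem, mul_zero]
      intro hmem'
      rw [mem_cell_iff _ _ _ hwn] at hmem hmem'
      apply hk
      have h1 : (k : ℝ) < (k₀ : ℝ) + 1 := by linarith [hmem.1, hmem'.2]
      have h2 : (k₀ : ℝ) < (k : ℝ) + 1 := by linarith [hmem'.1, hmem.2]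
      have := Int.lt_add_one_iff.mp (by exact_mod_cast h1)
      have := Int.lt_add_one_iff.mp (by exact_mod_cast h2)
      omega
  set y := v n + w n * (k₀ : ℝ) with hy
  have hyx : |y - x| ≤ w n / 2 := by
    rw [Set.mem_Ioc] at hmem
    rw [abs_le]; constructor <;> [linarith [hmem.2]; linarith [hmem.1]]
  have hxmem : x ∈ Set.Icc (a - 1) (b + 1) :=
    ⟨by linarith [hx.1], by linarith [hx.2]⟩
  have hymem : y ∈ Set.Icc (a - 1) (b + 1) := by
    have h1 := abs_le.mp hyx
    have hw1 : w n < 1 := lt_of_lt_of_le hwsmall (min_le_right _ _)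
    constructor <;> [linarith [hx.1, h1.1]; linarith [hx.2, h1.2]]
  have hdist : dist y x < δ := by
    rw [Real.dist_eq]
    calc |y - x| ≤ w n / 2 := hyx
    _ < δ := by have := lt_of_lt_of_le hwsmall (min_le_left _ _); linarith
  have hfy : |f y - f x| < ε * c / 2 := by
    have := hδ' y hymem x hxmem hdist
    rwa [Real.dist_eq] at this
  have hLLTn : |((μn n) {y}).toReal / w n - f y| < ε * c / 2 :=
    hN₁ n (le_trans (le_max_left _ _) hn) k₀
  have hdiff : |h n x - f x| < ε * c := by
    rw [hhx]
    calc |((μn n) {y}).toReal / w n - f x|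
        ≤ |((μn n) {y}).toReal / w n - f y| + |f y - f x| := abs_sub_le _ _ _
      _ < ε * c / 2 + ε * c / 2 := by gcongr
      _ = ε * c := by ring
  have hfx : c ≤ f x := hfc x hx
  have hfxpos : 0 < f x := lt_of_lt_of_le hc hfx
  have key : |h n x / f x - 1| = |h n x - f x| / f x := by
    have : h n x / f x - 1 = (h n x - f x) / f x := by field_simp
    rw [this, abs_div, abs_of_pos hfxpos]
  rw [key]
  calc |h n x - f x| / f x ≤ |h n x - f x| / c := by gcongr
    _ < ε := (div_lt_iff₀ hc).mpr (by linarith)
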